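/- Let G be a connected simple graph on n ≥ 3 vertices, let Tr_max(G) be its maximum transmission, and set R₁ = Σ_v Tr(v)² + 2·Σ_{u<v} d(u,v)². Then DLS(G) ≥ 1 + Tr_max(G) − sqrt((R₁ − (1 + Tr_max(G))²)/(n−2)), with equality if and only if G is the complete graph K_n. -/

import Mathlib

open Finset Matrix Polynomial

/-- The transmission `Tr(v)` of a vertex `v`: the sum of the distances from `v`
to all other vertices of the graph. -/
noncomputable def transm {n : ℕ} (G : SimpleGraph (Fin n)) (v : Fin n) : ℝ :=
  ∑ u : Fin n, (G.dist v u : ℝ)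

/-- The distance Laplacian matrix `D^L(G) = Diag(Tr) - D(G)` of a graph `G`. -/
noncomputable def distLap {n : ℕ} (G : SimpleGraph (Fin n)) : Matrix (Fin n) (Fin n) ℝ :=
  Matrix.diagonal (transm G) - Matrix.of (fun u v : Fin n => (G.dist u v : ℝ))

/-- `IsDLSpec G μ` says that `μ 0 , μ 1 , …, μ (n-1)` are exactly the eigenvalues
(with multiplicity) of the distance Laplacian matrix of `G`; combined with `Antitone μ`
this means `μ ⟨i-1,_⟩ = ∂_i^L(G)` in the usual decreasing ordering. -/
def IsDLSpec {n : ℕ} (G : SimpleGraph (Fin n)) (μ : Fin n → ℝ) : Prop :=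
  (distLap G).charpoly = ∏ i : Fin n, (X - C (μ i))

/-- The Wiener index `W(G) = (1/2) ∑_v Tr(v)`. -/
noncomputable def wiener {n : ℕ} (G : SimpleGraph (Fin n)) : ℝ :=
  (∑ v : Fin n, transm G v) / 2

/-- The maximum transmission `Tr_max(G) = max_v Tr(v)`. -/
noncomputable def trMax {n : ℕ} (G : SimpleGraph (Fin n)) : ℝ :=
  ⨆ v : Fin n, transm G v

/-- `R₁ = ∑_v Tr(v)² + 2 ∑_{u<v} d(u,v)²`. -/
noncomputable def R1 {n : ℕ} (G : SimpleGraph (Fin n)) : ℝ :=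
  ∑ v : Fin n, (transm G v) ^ 2 +
    2 * ∑ u : Fin n, ∑ v ∈ Finset.univ.filter (fun v : Fin n => u < v), (G.dist u v : ℝ) ^ 2

section Aux

variable {n : ℕ} (G : SimpleGraph (Fin n))

lemma distLap_apply (u v : Fin n) :
    distLap G u v = (if u = v then transm G u else 0) - (G.dist u v : ℝ) := by
  simp [distLap, Matrix.diagonal_apply, Matrix.sub_apply]

lemma distLap_isHermitian : (distLap G).IsHermitian := by
  rw [Matrix.IsHermitian, conjTranspose_eq_transpose_of_trivial]
  ext u v
  simp only [Matrix.transpose_apply, distLap_apply, SimpleGraph.dist_comm]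
  by_cases h : u = v <;> simp [h, eq_comm]

lemma quadform (x : Fin n → ℝ) :
    x ⬝ᵥ (distLap G *ᵥ x) = ∑ u, ∑ w, (G.dist u w : ℝ) * (x u ^ 2 - x u * x w) := by
  simp only [dotProduct, mulVec, dotProduct, distLap_apply]
  refine Finset.sum_congr rfl fun u _ => ?_
  have h1 : ∑ w, ((if u = w then transm G u else 0) - (G.dist u w : ℝ)) * x w
      = transm G u * x u - ∑ w, (G.dist u w : ℝ) * x w := by
    simp only [sub_mul, Finset.sum_sub_distrib]
    congr 1
    have : ∀ w : Fin n, (if u = w then transm G u else 0) * x w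
        = if u = w then transm G u * x w else 0 := by
      intro w; by_cases h : u = w <;> simp [h]
    simp only [this]
    simp
  rw [h1]
  have h2 : ∑ w, (G.dist u w : ℝ) * (x u ^ 2 - x u * x w)
      = (∑ w, (G.dist u w : ℝ)) * x u ^ 2 - x u * ∑ w, (G.dist u w : ℝ) * x w := by
    simp only [mul_sub, Finset.sum_sub_distrib]
    congr 1
    · rw [Finset.sum_mul]
    · rw [Finset.mul_sum]; refine Finset.sum_congr rfl fun w _ => by ring
  rw [h2]
  have : transm G u = ∑ w, (G.dist u w : ℝ) := rfl
  rw [this]; ring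

lemma double_sum_symm (g : Fin n → Fin n → ℝ) (hsymm : ∀ i j, g i j = g j i)
    (hdiag : ∀ i, g i i = 0) :
    ∑ i, ∑ j, g i j = 2 * ∑ i, ∑ j ∈ Finset.univ.filter (fun j => i < j), g i j := by
  have key : ∀ i j : Fin n, g i j = (if i < j then g i j else 0) + (if j < i then g i j else 0) := by
    intro i j
    rcases lt_trichotomy i j with h | h | h
    · simp [h, not_lt_of_gt h]
    · simp [h, lt_irrefl, hdiag]
    · simp [h, not_lt_of_gt h]
  have h1 : ∑ i, ∑ j, g i j
      = (∑ i, ∑ j, if i < j then g i j else 0) + ∑ i, ∑ j, if j < i then g i j else 0 := by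
    rw [← Finset.sum_add_distrib]
    refine Finset.sum_congr rfl fun i _ => ?_
    rw [← Finset.sum_add_distrib]
    exact Finset.sum_congr rfl fun j _ => key i j
  have h2 : (∑ i, ∑ j, if j < i then g i j else 0) = ∑ i, ∑ j, if i < j then g i j else 0 := by
    rw [Finset.sum_comm]
    refine Finset.sum_congr rfl fun i _ => Finset.sum_congr rfl fun j _ => ?_
    by_cases h : i < j <;> simp [h, hsymm i j]
  have h3 : (∑ i, ∑ j, if i < j then g i j else 0)
      = ∑ i, ∑ j ∈ Finset.univ.filter (fun j => i < j), g i j := by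
    refine Finset.sum_congr rfl fun i _ => ?_
    rw [Finset.sum_filter]
  rw [h1, h2, h3]; ring

lemma distLap_posSemidef : (distLap G).PosSemidef := by
  refine posSemidef_iff_dotProduct_mulVec.mpr ⟨distLap_isHermitian G, fun x => ?_⟩
  have hs : star x = x := by simp
  rw [hs, quadform]
  have h : ∑ u, ∑ w, (G.dist u w : ℝ) * (x u ^ 2 - x u * x w)
      = (1/2) * ∑ u, ∑ w, (G.dist u w : ℝ) * (x u - x w) ^ 2 := by
    have e1 : ∑ u, ∑ w, (G.dist u w : ℝ) * (x u - x w) ^ 2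
        = (∑ u, ∑ w, (G.dist u w : ℝ) * (x u ^ 2 - x u * x w))
          + ∑ u, ∑ w, (G.dist u w : ℝ) * (x w ^ 2 - x w * x u) := by
      rw [← Finset.sum_add_distrib]
      refine Finset.sum_congr rfl fun u _ => ?_
      rw [← Finset.sum_add_distrib]
      exact Finset.sum_congr rfl fun w _ => by ring
    have e2 : ∑ u, ∑ w, (G.dist u w : ℝ) * (x w ^ 2 - x w * x u)
        = ∑ u, ∑ w, (G.dist u w : ℝ) * (x u ^ 2 - x u * x w) := by
      rw [Finset.sum_comm]
      refine Finset.sum_congr rfl fun u _ => Finset.sum_congr rfl fun w _ => ?_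
      rw [SimpleGraph.dist_comm]
    rw [e1, e2]; ring
  rw [h]
  have : (0:ℝ) ≤ ∑ u, ∑ w, (G.dist u w : ℝ) * (x u - x w) ^ 2 :=
    Finset.sum_nonneg fun u _ => Finset.sum_nonneg fun w _ =>
      mul_nonneg (Nat.cast_nonneg _) (sq_nonneg _)
  linarith

lemma trace_distLap : (distLap G).trace = ∑ v, transm G v := by
  simp [Matrix.trace, Matrix.diag, distLap_apply, SimpleGraph.dist_self]

lemma trace_distLap_sq : (distLap G * distLap G).trace = R1 G := by
  have h : ∀ i j : Fin n, distLap G i j * distLap G j i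
      = if i = j then (transm G i) ^ 2 else (G.dist i j : ℝ) ^ 2 := by
    intro i j
    by_cases h : i = j
    · subst h; simp [distLap_apply, SimpleGraph.dist_self]; ring
    · have h' : ¬ (j = i) := fun hh => h hh.symm
      simp only [distLap_apply, if_neg h, if_neg h']
      rw [SimpleGraph.dist_comm]
      ring
  have : (distLap G * distLap G).trace = ∑ i, ∑ j, distLap G i j * distLap G j i := by
    simp [Matrix.trace, Matrix.diag, Matrix.mul_apply]
  rw [this]
  simp only [h]
  have split : ∀ i : Fin n, (∑ j, if i = j then (transm G i) ^ 2 else (G.dist i j : ℝ) ^ 2)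
      = (transm G i) ^ 2 + ∑ j, (if i = j then 0 else (G.dist i j : ℝ) ^ 2) := by
    intro i
    have e : ∀ j : Fin n, (if i = j then (transm G i) ^ 2 else (G.dist i j : ℝ) ^ 2)
        = (if i = j then (transm G i) ^ 2 else 0) + (if i = j then 0 else (G.dist i j : ℝ) ^ 2) := by
      intro j; by_cases h : i = j <;> simp [h]
    simp only [e, Finset.sum_add_distrib, Finset.sum_ite_eq]
    simp
  simp only [split, Finset.sum_add_distrib]
  have hsymm : ∀ i j : Fin n, (if i = j then (0:ℝ) else (G.dist i j : ℝ) ^ 2)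
      = (if j = i then (0:ℝ) else (G.dist j i : ℝ) ^ 2) := by
    intro i j
    by_cases h : i = j
    · simp [h]
    · have h' : ¬ (j = i) := fun hh => h hh.symm
      simp only [if_neg h, if_neg h', SimpleGraph.dist_comm]
  rw [double_sum_symm _ hsymm (by simp)]
  have last : ∀ i : Fin n, ∑ j ∈ Finset.univ.filter (fun j => i < j),
      (if i = j then (0:ℝ) else (G.dist i j : ℝ) ^ 2)
      = ∑ j ∈ Finset.univ.filter (fun j => i < j), (G.dist i j : ℝ) ^ 2 := by
    intro i
    refine Finset.sum_congr rfl fun j hj => ?_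
    rw [if_neg (ne_of_lt (Finset.mem_filter.mp hj).2)]
  simp only [last, R1]

end Aux

section Spectral

variable {m : ℕ} {A : Matrix (Fin m) (Fin m) ℝ}

lemma charmatrix_diagonal' (d : Fin m → ℝ) :
    charmatrix (Matrix.diagonal d) = Matrix.diagonal (fun i => (X : ℝ[X]) - C (d i)) := by
  ext i j
  by_cases h : i = j
  · subst h; simp [charmatrix_apply_eq, Matrix.diagonal_apply_eq]
  · rw [charmatrix_apply_ne _ _ _ h, Matrix.diagonal_apply_ne _ h,
      Matrix.diagonal_apply_ne _ h]
    simp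

lemma charpoly_diagonal' (d : Fin m → ℝ) :
    (Matrix.diagonal d).charpoly = ∏ i, ((X : ℝ[X]) - C (d i)) := by
  rw [Matrix.charpoly, charmatrix_diagonal', Matrix.det_diagonal]

lemma charpoly_eq_prod_eigenvalues (hA : A.IsHermitian) :
    A.charpoly = ∏ i, ((X : ℝ[X]) - C (hA.eigenvalues i)) := by
  set U : Matrix (Fin m) (Fin m) ℝ := (hA.eigenvectorUnitary : Matrix (Fin m) (Fin m) ℝ) with hU
  have hU1 : U * star U = 1 := mem_unitaryGroup_iff.mp hA.eigenvectorUnitary.2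
  have hOf : (RCLike.ofReal ∘ hA.eigenvalues : Fin m → ℝ) = hA.eigenvalues := by
    funext i; simp [RCLike.ofReal_real_eq_id]
  have hspec : A = U * Matrix.diagonal hA.eigenvalues * star U := by
    conv_lhs => rw [hA.spectral_theorem]
    rw [hOf]
    simp [Unitary.conjStarAlgAut_apply, hU]
  have key : charmatrix A
      = U.map C * charmatrix (Matrix.diagonal hA.eigenvalues) * (star U).map C := by
    rw [charmatrix]
    rw [charmatrix]
    rw [mul_sub, sub_mul]
    congr 1
    · have comm : U.map C * Matrix.scalar (Fin m) (X : ℝ[X])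
          = Matrix.scalar (Fin m) (X : ℝ[X]) * U.map C :=
        (Matrix.scalar_commute _ (fun r' => Commute.all _ _) _).symm
      rw [comm, mul_assoc, ← Matrix.map_mul, hU1]
      simp
    · simp only [RingHom.mapMatrix_apply]
      rw [← Matrix.map_mul, ← Matrix.map_mul, ← hspec]
  rw [Matrix.charpoly, key, Matrix.det_mul, Matrix.det_mul]
  have : (U.map C).det * (charmatrix (Matrix.diagonal hA.eigenvalues)).det
      * ((star U).map C).det
      = (charmatrix (Matrix.diagonal hA.eigenvalues)).det
        * ((U.map C).det * ((star U).map C).det) := by ring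
  rw [this, ← Matrix.det_mul, ← Matrix.map_mul, hU1]
  have h1 : ((1 : Matrix (Fin m) (Fin m) ℝ).map (C : ℝ → ℝ[X])).det = 1 := by
    rw [Matrix.map_one _ (map_zero C) (map_one C), Matrix.det_one]
  rw [h1, mul_one]
  exact charpoly_diagonal' _

lemma eigen_multiset_eq (hA : A.IsHermitian) (μ : Fin m → ℝ)
    (h : A.charpoly = ∏ i, ((X:ℝ[X]) - C (μ i))) :
    Multiset.map μ Finset.univ.val = Multiset.map hA.eigenvalues Finset.univ.val := by
  have h2 := charpoly_eq_prod_eigenvalues hA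
  have e1 : ∏ i : Fin m, ((X:ℝ[X]) - C (μ i))
      = ((Multiset.map μ Finset.univ.val).map (fun a => (X:ℝ[X]) - C a)).prod := by
    rw [Multiset.map_map]; rfl
  have e2 : ∏ i : Fin m, ((X:ℝ[X]) - C (hA.eigenvalues i))
      = ((Multiset.map hA.eigenvalues Finset.univ.val).map (fun a => (X:ℝ[X]) - C a)).prod := by
    rw [Multiset.map_map]; rfl
  have heq := (h.symm.trans h2)
  rw [e1, e2] at heq
  have := congrArg Polynomial.roots heq
  rwa [Polynomial.roots_multiset_prod_X_sub_C, Polynomial.roots_multiset_prod_X_sub_C] at this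

lemma sum_comp_of_multiset_eq (f : ℝ → ℝ) (μ ν : Fin m → ℝ)
    (h : Multiset.map μ Finset.univ.val = Multiset.map ν Finset.univ.val) :
    ∑ i, f (μ i) = ∑ i, f (ν i) := by
  have e1 : ∑ i, f (μ i) = ((Multiset.map μ Finset.univ.val).map f).sum := by
    rw [Multiset.map_map]; rfl
  have e2 : ∑ i, f (ν i) = ((Multiset.map ν Finset.univ.val).map f).sum := by
    rw [Multiset.map_map]; rfl
  rw [e1, e2, h]

lemma exists_of_multiset_eq (μ ν : Fin m → ℝ)
    (h : Multiset.map μ Finset.univ.val = Multiset.map ν Finset.univ.val) (i : Fin m) :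
    ∃ j, μ i = ν j := by
  have : μ i ∈ Multiset.map ν Finset.univ.val := by
    rw [← h]; exact Multiset.mem_map_of_mem _ (Finset.mem_univ i)
  obtain ⟨j, _, hj⟩ := Multiset.mem_map.mp this
  exact ⟨j, hj.symm⟩

lemma sum_eigenvalues_sq_eq (hA : A.IsHermitian) :
    ∑ i, hA.eigenvalues i ^ 2 = (A * A).trace := by
  set U : Matrix (Fin m) (Fin m) ℝ := (hA.eigenvectorUnitary : Matrix (Fin m) (Fin m) ℝ) with hUdef
  set D : Matrix (Fin m) (Fin m) ℝ := Matrix.diagonal hA.eigenvalues with hD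
  have hU2 : star U * U = 1 := mem_unitaryGroup_iff'.mp hA.eigenvectorUnitary.2
  have hOf : (RCLike.ofReal ∘ hA.eigenvalues : Fin m → ℝ) = hA.eigenvalues := by
    funext i; simp [RCLike.ofReal_real_eq_id]
  have hspec : A = U * D * star U := by
    conv_lhs => rw [hA.spectral_theorem]
    rw [hOf]
    simp [Unitary.conjStarAlgAut_apply, hUdef, hD]
  have hA2 : A * A = U * (D * D) * star U := by
    rw [hspec]
    calc U * D * star U * (U * D * star U) = U * (D * ((star U * U) * (D * star U))) := by
          noncomm_ring
      _ = U * (D * D) * star U := by rw [hU2]; noncomm_ring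
  rw [hA2, Matrix.trace_mul_comm, ← mul_assoc, ← mul_assoc, hU2, one_mul,
    Matrix.diagonal_mul_diagonal, Matrix.trace_diagonal]
  exact Finset.sum_congr rfl fun i _ => sq _

lemma sum_eigenvalues_eq (hA : A.IsHermitian) : ∑ i, hA.eigenvalues i = A.trace := by
  set U : Matrix (Fin m) (Fin m) ℝ := (hA.eigenvectorUnitary : Matrix (Fin m) (Fin m) ℝ) with hUdef
  have hU2 : star U * U = 1 := mem_unitaryGroup_iff'.mp hA.eigenvectorUnitary.2
  have hOf : (RCLike.ofReal ∘ hA.eigenvalues : Fin m → ℝ) = hA.eigenvalues := by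
    funext i; simp [RCLike.ofReal_real_eq_id]
  have hspec : A = U * Matrix.diagonal hA.eigenvalues * star U := by
    conv_lhs => rw [hA.spectral_theorem]
    rw [hOf]
    simp [Unitary.conjStarAlgAut_apply, hUdef]
  conv_rhs => rw [hspec]
  rw [Matrix.trace_mul_comm, ← mul_assoc, hU2, one_mul, Matrix.trace_diagonal]

lemma rayleigh_le_of_eigen_le (hA : A.IsHermitian) (c : ℝ)
    (h : ∀ j, hA.eigenvalues j ≤ c) (x : Fin m → ℝ) :
    x ⬝ᵥ (A *ᵥ x) ≤ c * (x ⬝ᵥ x) := by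
  set U : Matrix (Fin m) (Fin m) ℝ := (hA.eigenvectorUnitary : Matrix (Fin m) (Fin m) ℝ) with hUdef
  have hU1 : U * star U = 1 := mem_unitaryGroup_iff.mp hA.eigenvectorUnitary.2
  have hOf : (RCLike.ofReal ∘ hA.eigenvalues : Fin m → ℝ) = hA.eigenvalues := by
    funext i; simp [RCLike.ofReal_real_eq_id]
  have hspec : A = U * Matrix.diagonal hA.eigenvalues * star U := by
    conv_lhs => rw [hA.spectral_theorem]
    rw [hOf]
    simp [Unitary.conjStarAlgAut_apply, hUdef]
  set y : Fin m → ℝ := (star U) *ᵥ x with hy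
  have hyvm : y = x ᵥ* U := by
    rw [hy, Matrix.star_eq_conjTranspose, conjTranspose_eq_transpose_of_trivial,
      Matrix.mulVec_transpose]
  have h2 : ∀ w : Fin m → ℝ, x ⬝ᵥ (U *ᵥ w) = y ⬝ᵥ w := by
    intro w; rw [Matrix.dotProduct_mulVec, ← hyvm]
  have h1 : A *ᵥ x = U *ᵥ (Matrix.diagonal hA.eigenvalues *ᵥ y) := by
    conv_lhs => rw [hspec]
    rw [← Matrix.mulVec_mulVec, ← Matrix.mulVec_mulVec]
  have h3 : y ⬝ᵥ y = x ⬝ᵥ x := by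
    have : U *ᵥ y = x := by
      rw [hy, Matrix.mulVec_mulVec, hU1, Matrix.one_mulVec]
    calc y ⬝ᵥ y = x ⬝ᵥ (U *ᵥ y) := (h2 y).symm
      _ = x ⬝ᵥ x := by rw [this]
  have h4 : y ⬝ᵥ (Matrix.diagonal hA.eigenvalues *ᵥ y) = ∑ i, hA.eigenvalues i * y i ^ 2 := by
    simp only [dotProduct, Matrix.mulVec_diagonal]
    exact Finset.sum_congr rfl fun i _ => by ring
  have h5 : y ⬝ᵥ y = ∑ i, y i ^ 2 := by
    simp only [dotProduct]
    exact Finset.sum_congr rfl fun i _ => by ring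
  calc x ⬝ᵥ (A *ᵥ x) = ∑ i, hA.eigenvalues i * y i ^ 2 := by rw [h1, h2, h4]
    _ ≤ ∑ i, c * y i ^ 2 :=
        Finset.sum_le_sum fun i _ => mul_le_mul_of_nonneg_right (h i) (sq_nonneg _)
    _ = c * (x ⬝ᵥ x) := by rw [← Finset.mul_sum, ← h5, h3]

lemma eigen_le_of_rayleigh_le (hA : A.IsHermitian) (c : ℝ)
    (h : ∀ x : Fin m → ℝ, x ⬝ᵥ (A *ᵥ x) ≤ c * (x ⬝ᵥ x)) (j : Fin m) :
    hA.eigenvalues j ≤ c := by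
  set v : Fin m → ℝ := ⇑(hA.eigenvectorBasis j) with hv
  have hAv : A *ᵥ v = hA.eigenvalues j • v := hA.mulVec_eigenvectorBasis j
  have hvv : v ⬝ᵥ v = 1 := by
    have hnorm := hA.eigenvectorBasis.orthonormal.1 j
    have hinner : (inner ℝ (hA.eigenvectorBasis j) (hA.eigenvectorBasis j) : ℝ) = 1 := by
      rw [real_inner_self_eq_norm_sq, hnorm]; norm_num
    rw [← hinner, PiLp.inner_apply]
    simp only [dotProduct, RCLike.inner_apply, starRingEnd_apply, star_trivial]
    rfl
  have hQ : v ⬝ᵥ (A *ᵥ v) = hA.eigenvalues j := by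
    rw [hAv, dotProduct_smul, hvv]
    simp
  have h2 := h v
  rwa [hQ, hvv, mul_one] at h2

end Spectral

section GraphSide

variable {n : ℕ} (G : SimpleGraph (Fin n))

lemma sum_indicator_ne (v : Fin n) : ∑ u : Fin n, (if u = v then (0:ℝ) else 1) = n - 1 := by
  have : ∀ u : Fin n, (if u = v then (0:ℝ) else 1) = 1 - (if u = v then 1 else 0) := by
    intro u; by_cases h : u = v <;> simp [h]
  simp only [this, Finset.sum_sub_distrib, Finset.sum_const, Finset.sum_ite_eq,
    Finset.mem_univ, if_pos]
  simp

lemma transm_ge (hG : G.Connected) (v : Fin n) : (n:ℝ) - 1 ≤ transm G v := by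
  rw [← sum_indicator_ne v, transm]
  refine Finset.sum_le_sum fun u _ => ?_
  by_cases h : u = v
  · subst h; simp [SimpleGraph.dist_self]
  · rw [if_neg h]
    have : 0 < G.dist v u := hG.pos_dist_of_ne (fun hh => h hh.symm)
    exact_mod_cast this

lemma exists_argmax (hn : 1 ≤ n) : ∃ v : Fin n, trMax G = transm G v ∧
    ∀ u, transm G u ≤ transm G v := by
  have : Nonempty (Fin n) := ⟨⟨0, hn⟩⟩
  obtain ⟨v, hv⟩ := Finite.exists_max (transm G)
  exact ⟨v, le_antisymm (ciSup_le hv) (le_ciSup (Finite.bddAbove_range _) v), hv⟩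

lemma rayleigh_vec_quad (d : Fin n → Fin n → ℝ) (hsymm : ∀ u w, d u w = d w u)
    (hdiag : ∀ u, d u u = 0) (v : Fin n) :
    ∑ u, ∑ w, d u w * ((fun w => (n:ℝ) * (if w = v then 1 else 0) - 1) u ^ 2
      - (fun w => (n:ℝ) * (if w = v then 1 else 0) - 1) u
        * (fun w => (n:ℝ) * (if w = v then 1 else 0) - 1) w)
    = (n:ℝ)^2 * ∑ w, d v w := by
  set x : Fin n → ℝ := fun w => (n:ℝ) * (if w = v then 1 else 0) - 1 with hx
  have key : ∀ u w, d u w * (x u ^ 2 - x u * x w)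
      = (n:ℝ) * (d u w * x u * (if u = v then 1 else 0))
        - (n:ℝ) * (d u w * x u * (if w = v then 1 else 0)) := by
    intro u w
    by_cases h1 : u = v <;> by_cases h2 : w = v <;> simp only [hx, h1, h2, if_pos, if_neg,
      reduceIte] <;> ring_nf <;> simp [h1, h2] <;> ring
  simp only [key, Finset.sum_sub_distrib]
  have S1 : ∑ u, ∑ w, (n:ℝ) * (d u w * x u * (if u = v then 1 else 0))
      = (n:ℝ) * (((n:ℝ) - 1) * ∑ w, d v w) := by
    have inner : ∀ u, ∑ w, (n:ℝ) * (d u w * x u * (if u = v then 1 else 0))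
        = if u = v then ((n:ℝ) * x v * ∑ w, d v w) else 0 := by
      intro u
      by_cases h : u = v
      · subst h; simp only [if_pos]
        rw [Finset.mul_sum]
        exact Finset.sum_congr rfl fun w _ => by ring
      · simp [h]
    rw [Finset.sum_congr rfl fun u _ => inner u, Finset.sum_ite_eq']
    have hxv : x v = (n:ℝ) - 1 := by simp [hx]
    simp [hxv]
    ring
  have S2 : ∑ u, ∑ w, (n:ℝ) * (d u w * x u * (if w = v then 1 else 0))
      = -(n:ℝ) * ∑ w, d v w := by
    have inner : ∀ u, ∑ w, (n:ℝ) * (d u w * x u * (if w = v then 1 else 0))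
        = (n:ℝ) * x u * d u v := by
      intro u
      have : ∀ w, (n:ℝ) * (d u w * x u * (if w = v then 1 else 0))
          = if w = v then (n:ℝ) * x u * d u w else 0 := by
        intro w; by_cases h : w = v <;> simp [h] <;> ring
      rw [Finset.sum_congr rfl fun w _ => this w, Finset.sum_ite_eq']
      simp
    rw [Finset.sum_congr rfl fun u _ => inner u]
    have expand : ∀ u, (n:ℝ) * x u * d u v
        = (n:ℝ) * ((n:ℝ) * (if u = v then d u v else 0)) - (n:ℝ) * d u v := by
      intro u; by_cases h : u = v <;> simp [hx, h] <;> ring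
    rw [Finset.sum_congr rfl fun u _ => expand u, Finset.sum_sub_distrib]
    have e1 : (∑ u : Fin n, (n:ℝ) * ((n:ℝ) * if u = v then d u v else 0)) = 0 := by
      have e : ∀ u : Fin n, (n:ℝ) * ((n:ℝ) * if u = v then d u v else 0)
          = if u = v then (n:ℝ) * ((n:ℝ) * d u v) else 0 := by
        intro u; by_cases h : u = v <;> simp [h]
      rw [Finset.sum_congr rfl fun u _ => e u, Finset.sum_ite_eq']
      simp [hdiag]
    have e2 : (∑ u : Fin n, (n:ℝ) * d u v) = (n:ℝ) * ∑ w, d v w := by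
      rw [← Finset.mul_sum]; congr 1; exact Finset.sum_congr rfl fun u _ => hsymm u v
    rw [e1, e2]; ring
  rw [S1, S2]
  ring

lemma rayleigh_vec_sq (v : Fin n) :
    (fun w => (n:ℝ) * (if w = v then 1 else 0) - 1) ⬝ᵥ
    (fun w => (n:ℝ) * (if w = v then 1 else 0) - 1) = (n:ℝ)^2 - n := by
  simp only [dotProduct]
  have : ∀ u : Fin n, ((n:ℝ) * (if u = v then 1 else 0) - 1)
      * ((n:ℝ) * (if u = v then 1 else 0) - 1)
      = ((n:ℝ)^2 - 2*n) * (if u = v then 1 else 0) + 1 := by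
    intro u; by_cases h : u = v <;> simp [h] <;> ring
  rw [Finset.sum_congr rfl fun u _ => this u, Finset.sum_add_distrib, ← Finset.mul_sum,
    Finset.sum_ite_eq']
  simp
  ring

lemma dist_top_real (u v : Fin n) :
    ((⊤ : SimpleGraph (Fin n)).dist u v : ℝ) = if u = v then 0 else 1 := by
  by_cases h : u = v
  · subst h; simp [SimpleGraph.dist_self]
  · rw [if_neg h]
    have : (⊤ : SimpleGraph (Fin n)).dist u v = 1 :=
      SimpleGraph.dist_eq_one_iff_adj.mpr (by simpa using h)
    rw [this]; norm_num

lemma top_quad_le (x : Fin n → ℝ) :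
    ∑ u, ∑ w, (if u = w then (0:ℝ) else 1) * (x u ^ 2 - x u * x w)
      ≤ (n:ℝ) * ∑ u, x u * x u := by
  have key : ∀ u w : Fin n, (if u = w then (0:ℝ) else 1) * (x u ^ 2 - x u * x w)
      = (x u ^ 2 - x u * x w) - (if u = w then (x u ^ 2 - x u * x w) else 0) := by
    intro u w; by_cases h : u = w <;> simp [h]
  have h0 : ∑ u, ∑ w, (if u = w then (0:ℝ) else 1) * (x u ^ 2 - x u * x w)
      = (∑ u : Fin n, ∑ w : Fin n, (x u ^ 2 - x u * x w)) - ∑ u : Fin n, (x u ^ 2 - x u * x u) := by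
    rw [← Finset.sum_sub_distrib]
    refine Finset.sum_congr rfl fun u _ => ?_
    rw [Finset.sum_congr rfl fun w _ => key u w, Finset.sum_sub_distrib]
    congr 1
    rw [Finset.sum_ite_eq]
    simp
  rw [h0]
  have e1 : ∑ u : Fin n, ∑ w : Fin n, (x u ^ 2 - x u * x w)
      = (n:ℝ) * ∑ u, x u ^ 2 - (∑ u, x u) * (∑ u, x u) := by
    simp only [Finset.sum_sub_distrib, Finset.sum_const, Finset.card_univ, Fintype.card_fin,
      nsmul_eq_mul]
    congr 1
    · rw [Finset.mul_sum]
    · rw [Finset.sum_mul]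
      exact Finset.sum_congr rfl fun u _ => by rw [Finset.mul_sum]
  rw [e1]
  have e2 : ∑ u : Fin n, (x u ^ 2 - x u * x u) = 0 :=
    Finset.sum_eq_zero fun u _ => by ring
  rw [e2]
  have e3 : ∑ u : Fin n, x u * x u = ∑ u : Fin n, x u ^ 2 :=
    Finset.sum_congr rfl fun u _ => (sq (x u)).symm
  rw [e3]
  have := sq_nonneg (∑ u, x u)
  rw [sq] at this
  linarith

lemma sum_erase_two (f : Fin n → ℝ) (a b : Fin n) (hab : a ≠ b) :
    ∑ i, f i = f a + f b + ∑ i ∈ (Finset.univ.erase a).erase b, f i := by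
  have h1 : f a + ∑ i ∈ Finset.univ.erase a, f i = ∑ i, f i :=
    Finset.add_sum_erase _ f (Finset.mem_univ a)
  have hb : b ∈ Finset.univ.erase a := Finset.mem_erase.mpr ⟨fun h => hab h.symm, Finset.mem_univ b⟩
  have h2 : f b + ∑ i ∈ (Finset.univ.erase a).erase b, f i = ∑ i ∈ Finset.univ.erase a, f i :=
    Finset.add_sum_erase _ f hb
  rw [← h1, ← h2]
  ring

lemma card_erase_two (a b : Fin n) (hab : a ≠ b) :
    ((Finset.univ.erase a).erase b).card = n - 2 := by
  have hb : b ∈ Finset.univ.erase a := Finset.mem_erase.mpr ⟨fun h => hab h.symm, Finset.mem_univ b⟩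
  rw [Finset.card_erase_of_mem hb, Finset.card_erase_of_mem (Finset.mem_univ a)]
  rw [Finset.card_univ, Fintype.card_fin]
  omega

end GraphSide

set_option maxHeartbeats 2000000 in
theorem dls_lower_R1_trMax (n : ℕ) (hn : 3 ≤ n) (G : SimpleGraph (Fin n))
    (hG : G.Connected) (μ : Fin n → ℝ) (hμ : IsDLSpec G μ) (hmono : Antitone μ) :
    1 + trMax G - Real.sqrt ((R1 G - (1 + trMax G) ^ 2) / ((n : ℝ) - 2))
      ≤ μ ⟨0, by omega⟩ - μ ⟨n - 2, by omega⟩ ∧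
    (μ ⟨0, by omega⟩ - μ ⟨n - 2, by omega⟩
        = 1 + trMax G - Real.sqrt ((R1 G - (1 + trMax G) ^ 2) / ((n : ℝ) - 2))
      ↔ G = ⊤) := by
  have hnR : (3:ℝ) ≤ (n:ℝ) := by exact_mod_cast hn
  set i0 : Fin n := ⟨0, by omega⟩ with hi0def
  set i1 : Fin n := ⟨n - 2, by omega⟩ with hi1def
  set ilast : Fin n := ⟨n - 1, by omega⟩ with hilastdef
  have hHerm := distLap_isHermitian G
  have hPSD := distLap_posSemidef G
  have hms : Multiset.map μ Finset.univ.val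
      = Multiset.map hHerm.eigenvalues Finset.univ.val := eigen_multiset_eq hHerm μ hμ
  have hμ_nonneg : ∀ i, 0 ≤ μ i := by
    intro i
    obtain ⟨j, hj⟩ := exists_of_multiset_eq μ hHerm.eigenvalues hms i
    rw [hj]
    exact hPSD.eigenvalues_nonneg j
  have hi0_le : ∀ i : Fin n, i0 ≤ i := fun i => by
    simp only [hi0def]
    exact Fin.le_def.mpr (Nat.zero_le _)
  have hev_le_μ0 : ∀ j, hHerm.eigenvalues j ≤ μ i0 := by
    intro j
    obtain ⟨i, hi⟩ := exists_of_multiset_eq hHerm.eigenvalues μ hms.symm j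
    rw [hi]
    exact hmono (hi0_le i)
  have hsum : ∑ i, μ i = ∑ v, transm G v := by
    have := sum_comp_of_multiset_eq id μ hHerm.eigenvalues hms
    simp only [id] at this
    rw [this, sum_eigenvalues_eq, trace_distLap]
  have hsumsq : ∑ i, (μ i) ^ 2 = R1 G := by
    have := sum_comp_of_multiset_eq (fun t => t ^ 2) μ hHerm.eigenvalues hms
    rw [this, sum_eigenvalues_sq_eq, trace_distLap_sq]
  obtain ⟨v₀, hv₀, hv₀max⟩ := exists_argmax G (by omega)
  have hT1 : (n:ℝ) - 1 ≤ trMax G := hv₀ ▸ transm_ge G hG v₀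
  -- Rayleigh bound for the largest eigenvalue
  have hray : (n:ℝ)^2 * trMax G ≤ μ i0 * ((n:ℝ)^2 - n) := by
    set x : Fin n → ℝ := fun w => (n:ℝ) * (if w = v₀ then 1 else 0) - 1 with hx
    have h1 : x ⬝ᵥ (distLap G *ᵥ x) = (n:ℝ)^2 * transm G v₀ := by
      rw [quadform]
      exact rayleigh_vec_quad (fun u w => (G.dist u w : ℝ))
        (fun u w => by simp [SimpleGraph.dist_comm]) (fun u => by simp [SimpleGraph.dist_self]) v₀
    have h2 : x ⬝ᵥ x = (n:ℝ)^2 - n := rayleigh_vec_sq v₀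
    have h3 := rayleigh_le_of_eigen_le hHerm (μ i0) hev_le_μ0 x
    rw [h1, h2, ← hv₀] at h3
    linarith
  have hA1 : 1 + trMax G ≤ μ i0 := by
    have hpos : (0:ℝ) < (n:ℝ) * ((n:ℝ) - 1) := by nlinarith
    have key : (n:ℝ) * ((n:ℝ) - 1) * (1 + trMax G) ≤ (n:ℝ) * ((n:ℝ) - 1) * μ i0 := by
      nlinarith [hray, hT1]
    exact le_of_mul_le_mul_left key hpos
  have hi01 : i0 ≠ ilast := by
    simp only [hi0def, hilastdef, ne_eq, Fin.mk.injEq]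
    omega
  have hsplit := sum_erase_two (fun i => (μ i) ^ 2) i0 ilast hi01
  have hcard : ((Finset.univ.erase i0).erase ilast).card = n - 2 := card_erase_two i0 ilast hi01
  have hs_ge : ∀ i ∈ (Finset.univ.erase i0).erase ilast, (μ i1) ^ 2 ≤ (μ i) ^ 2 := by
    intro i hi
    obtain ⟨hne_last, hmem⟩ := Finset.mem_erase.mp hi
    have hle : i ≤ i1 := by
      have hv : (i : ℕ) < n := i.isLt
      have hne : (i : ℕ) ≠ n - 1 := fun h => hne_last (Fin.ext h)
      exact Fin.le_def.mpr (show (i:ℕ) ≤ n - 2 by omega)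
    exact pow_le_pow_left₀ (hμ_nonneg i1) (hmono hle) 2
  have hb2 : ((n:ℝ) - 2) * (μ i1) ^ 2 ≤ R1 G - (μ i0) ^ 2 := by
    have hge : ((Finset.univ.erase i0).erase ilast).card • ((μ i1) ^ 2)
        ≤ ∑ i ∈ (Finset.univ.erase i0).erase ilast, (μ i) ^ 2 :=
      Finset.card_nsmul_le_sum _ _ _ hs_ge
    rw [hcard] at hge
    have hcast : ((n - 2 : ℕ) : ℝ) = (n:ℝ) - 2 := by
      have : (2:ℕ) ≤ n := by omega
      push_cast [this]
      ring
    rw [nsmul_eq_mul, hcast] at hge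
    have hlast_sq : 0 ≤ (μ ilast) ^ 2 := sq_nonneg _
    have := hsplit
    rw [hsumsq] at this
    linarith
  have hA1sq : (1 + trMax G) ^ 2 ≤ (μ i0) ^ 2 := by
    have h1 : 0 ≤ 1 + trMax G := by linarith
    exact pow_le_pow_left₀ h1 hA1 2
  have hquot : (μ i1) ^ 2 ≤ (R1 G - (1 + trMax G) ^ 2) / ((n:ℝ) - 2) := by
    rw [le_div_iff₀ (by linarith : (0:ℝ) < (n:ℝ) - 2)]
    nlinarith [hb2, hA1sq]
  have hquot_nonneg : 0 ≤ (R1 G - (1 + trMax G) ^ 2) / ((n:ℝ) - 2) :=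
    le_trans (sq_nonneg _) hquot
  have hbB : μ i1 ≤ Real.sqrt ((R1 G - (1 + trMax G) ^ 2) / ((n:ℝ) - 2)) :=
    (Real.le_sqrt (hμ_nonneg i1) hquot_nonneg).mpr hquot
  refine ⟨by linarith, ?_, ?_⟩
  · -- equality implies complete
    intro heq
    have hμ0eq : μ i0 = 1 + trMax G := by linarith
    have hTle : trMax G ≤ (n:ℝ) - 1 := by nlinarith [hray, hμ0eq]
    have hTeq : ∀ v, transm G v = (n:ℝ) - 1 := by
      intro v
      have h1 : transm G v ≤ trMax G := hv₀ ▸ hv₀max v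
      have h2 := transm_ge G hG v
      linarith
    ext u w
    simp only [SimpleGraph.top_adj]
    constructor
    · exact fun h => h.ne
    · intro hne
      have hz : ∑ p : Fin n, ((G.dist u p : ℝ) - (if p = u then 0 else 1)) = 0 := by
        rw [Finset.sum_sub_distrib, sum_indicator_ne]
        have := hTeq u
        rw [transm] at this
        rw [this]
        ring
      have hnonneg : ∀ p : Fin n, p ∈ Finset.univ
          → 0 ≤ (G.dist u p : ℝ) - (if p = u then 0 else 1) := by
        intro p _
        by_cases h : p = u
        · subst h; simp [SimpleGraph.dist_self]
        · rw [if_neg h]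
          have : 0 < G.dist u p := hG.pos_dist_of_ne (fun hh => h hh.symm)
          have : (1:ℝ) ≤ (G.dist u p : ℝ) := by exact_mod_cast this
          linarith
      have hall := (Finset.sum_eq_zero_iff_of_nonneg hnonneg).mp hz w (Finset.mem_univ w)
      rw [if_neg (fun hh => hne hh.symm)] at hall
      have hd1 : (G.dist u w : ℝ) = 1 := by linarith
      have : G.dist u w = 1 := by exact_mod_cast hd1
      exact SimpleGraph.dist_eq_one_iff_adj.mp this
  · -- complete implies equality
    intro htop
    subst htop
    have htransm : ∀ v : Fin n, transm (⊤ : SimpleGraph (Fin n)) v = (n:ℝ) - 1 := by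
      intro v
      rw [transm]
      rw [Finset.sum_congr rfl fun u _ => dist_top_real v u]
      have : ∀ u : Fin n, (if v = u then (0:ℝ) else 1) = (if u = v then (0:ℝ) else 1) := by
        intro u
        by_cases h : u = v
        · simp [h]
        · rw [if_neg h, if_neg (fun hh => h hh.symm)]
      rw [Finset.sum_congr rfl fun u _ => this u, sum_indicator_ne]
    have hTmax : trMax (⊤ : SimpleGraph (Fin n)) = (n:ℝ) - 1 := by
      rw [hv₀, htransm]
    have hμ_le_n : ∀ i, μ i ≤ (n:ℝ) := by
      intro i
      obtain ⟨j, hj⟩ := exists_of_multiset_eq μ hHerm.eigenvalues hms i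
      rw [hj]
      refine eigen_le_of_rayleigh_le hHerm _ (fun x => ?_) j
      rw [quadform]
      have : ∀ u w : Fin n, ((⊤ : SimpleGraph (Fin n)).dist u w : ℝ) * (x u ^ 2 - x u * x w)
          = (if u = w then (0:ℝ) else 1) * (x u ^ 2 - x u * x w) := by
        intro u w; rw [dist_top_real]
      rw [Finset.sum_congr rfl fun u _ => Finset.sum_congr rfl fun w _ => this u w]
      exact top_quad_le x
    have hsum_val : ∑ i, μ i = (n:ℝ) * ((n:ℝ) - 1) := by
      rw [hsum, Finset.sum_congr rfl fun v _ => htransm v]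
      simp [Finset.card_univ]; ring
    have hR1_val : R1 (⊤ : SimpleGraph (Fin n)) = (n:ℝ)^2 * ((n:ℝ) - 1) := by
      rw [R1]
      have e1 : ∑ v : Fin n, (transm (⊤ : SimpleGraph (Fin n)) v) ^ 2 = (n:ℝ) * ((n:ℝ)-1)^2 := by
        rw [Finset.sum_congr rfl fun v _ => by rw [htransm v]]
        simp [Finset.card_univ]
      have e2 : 2 * ∑ u : Fin n, ∑ w ∈ Finset.univ.filter (fun w : Fin n => u < w),
          ((⊤ : SimpleGraph (Fin n)).dist u w : ℝ) ^ 2 = (n:ℝ) * ((n:ℝ) - 1) := by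
        have hsym : ∀ i j : Fin n, ((⊤ : SimpleGraph (Fin n)).dist i j : ℝ) ^ 2
            = ((⊤ : SimpleGraph (Fin n)).dist j i : ℝ) ^ 2 := by
          intro i j; rw [SimpleGraph.dist_comm]
        have := double_sum_symm (fun i j => ((⊤ : SimpleGraph (Fin n)).dist i j : ℝ) ^ 2)
          hsym (fun i => by simp [SimpleGraph.dist_self])
        rw [← this]
        have : ∀ i j : Fin n, ((⊤ : SimpleGraph (Fin n)).dist i j : ℝ) ^ 2
            = if i = j then (0:ℝ) else 1 := by
          intro i j; rw [dist_top_real]; by_cases h : i = j <;> simp [h]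
        rw [Finset.sum_congr rfl fun i _ => Finset.sum_congr rfl fun j _ => this i j]
        have : ∀ i : Fin n, ∑ j : Fin n, (if i = j then (0:ℝ) else 1) = (n:ℝ) - 1 := by
          intro i
          have e : ∀ j : Fin n, (if i = j then (0:ℝ) else 1) = (if j = i then (0:ℝ) else 1) := by
            intro j; by_cases h : i = j <;> simp [h, eq_comm]
          rw [Finset.sum_congr rfl fun j _ => e j, sum_indicator_ne]
        rw [Finset.sum_congr rfl fun i _ => this i]
        simp [Finset.card_univ]; ring
      rw [e1, e2]
      ring
    have hsumsq_val : ∑ i, (μ i) ^ 2 = (n:ℝ)^2 * ((n:ℝ) - 1) := by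
      rw [hsumsq, hR1_val]
    have hzero : ∀ i, μ i * ((n:ℝ) - μ i) = 0 := by
      have hsum0 : ∑ i, μ i * ((n:ℝ) - μ i) = 0 := by
        have e : ∑ i, μ i * ((n:ℝ) - μ i) = (n:ℝ) * (∑ i, μ i) - ∑ i, (μ i) ^ 2 := by
          rw [Finset.mul_sum, ← Finset.sum_sub_distrib]
          exact Finset.sum_congr rfl fun i _ => by ring
        rw [e, hsum_val, hsumsq_val]
        ring
      intro i
      exact (Finset.sum_eq_zero_iff_of_nonneg (fun i _ =>
        mul_nonneg (hμ_nonneg i) (by linarith [hμ_le_n i]))).mp hsum0 i (Finset.mem_univ i)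
    have hi1n : μ i1 = (n:ℝ) := by
      rcases mul_eq_zero.mp (hzero i1) with h | h
      · exfalso
        have hlast0 : μ ilast = 0 := by
          have h1 : i1 ≤ ilast := Fin.le_def.mpr (show n - 2 ≤ n - 1 by omega)
          have := hmono h1
          have := hμ_nonneg ilast
          linarith
        have hi1l : i1 ≠ ilast := by
          simp only [hi1def, hilastdef, ne_eq, Fin.mk.injEq]
          omega
        have hsplit2 := sum_erase_two (fun i => μ i) i1 ilast hi1l
        have hcard2 : ((Finset.univ.erase i1).erase ilast).card = n - 2 :=
          card_erase_two i1 ilast hi1l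
        have hub : ∑ i ∈ (Finset.univ.erase i1).erase ilast, μ i
            ≤ ((Finset.univ.erase i1).erase ilast).card • (n:ℝ) :=
          Finset.sum_le_card_nsmul _ _ _ (fun i _ => hμ_le_n i)
        rw [hcard2, nsmul_eq_mul] at hub
        have hcast : ((n - 2 : ℕ) : ℝ) = (n:ℝ) - 2 := by
          have : (2:ℕ) ≤ n := by omega
          push_cast [this]
          ring
        rw [hcast] at hub
        rw [hsum_val, h, hlast0] at hsplit2
        nlinarith
      · linarith
    have hi0n : μ i0 = (n:ℝ) :=
      le_antisymm (hμ_le_n i0) (hi1n ▸ hmono (hi0_le i1))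
    have hq : (R1 (⊤ : SimpleGraph (Fin n)) - (1 + trMax (⊤ : SimpleGraph (Fin n))) ^ 2)
        / ((n:ℝ) - 2) = (n:ℝ)^2 := by
      have h2 : (n:ℝ) - 2 ≠ 0 := by linarith
      rw [hR1_val, hTmax, div_eq_iff h2]
      ring
    rw [hq, hTmax, hi0n, hi1n, Real.sqrt_sq (by linarith : (0:ℝ) ≤ (n:ℝ))]
    ring
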